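/- Let D ≥ 1, θ₁ > 0, θ̂ > 0, w, v ∈ ℝ^D, and for τ ∈ [0,1] define the vector A(v,w,τ) ∈ ℝ^D componentwise by A_d = [(θ̂−1)τ+1] v_d + w_d τ, together with R(τ) = (θ̂−1)/((θ̂−1)τ+1) and S(τ) = 1/((θ̂−1)τ+1). Then for every multi-index α ∈ ℕ^D and τ ∈ [0,1], ∂/∂τ 𝓗_{θ₁,α}(A(v,w,τ)) = −Σ_{d=1}^D [ θ₁ R(τ) 𝓗_{θ₁,α+2e_d}(A(v,w,τ)) + w_d √θ₁ S(τ) 𝓗_{θ₁,α+e_d}(A(v,w,τ)) + (α_d+1) R(τ) 𝓗_{θ₁,α}(A(v,w,τ)) ]. -/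

import Mathlib

open MeasureTheory

/-- The probabilists' Hermite polynomial `He n`, evaluated at a real number. -/
noncomputable def He (n : ℕ) (x : ℝ) : ℝ :=
  Polynomial.aeval x (Polynomial.hermite n)

/-- The basis function `𝓗_{θ,α}(v) = ∏_d (2π)^(-1/2) θ^(-(α_d+1)/2) He_{α_d}(v_d) e^(-v_d²/2)`. -/
noncomputable def Hb {D : ℕ} (θ : ℝ) (α : Fin D → ℕ) (v : Fin D → ℝ) : ℝ :=
  ∏ d, ((Real.sqrt (2 * Real.pi))⁻¹ * θ ^ (-(((α d : ℝ) + 1) / 2)) * He (α d) (v d) *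
    Real.exp (-(v d) ^ 2 / 2))




open Polynomial in
lemma derivative_hermite_succ (n : ℕ) :
    Polynomial.derivative (Polynomial.hermite (n+1)) = (n+1 : ℕ) • Polynomial.hermite n := by
  induction n with
  | zero => simp [Polynomial.hermite_succ, Polynomial.hermite_zero]
  | succ n ih =>
    rw [Polynomial.hermite_succ (n+1), Polynomial.derivative_sub, Polynomial.derivative_mul,
      Polynomial.derivative_X, one_mul, ih, Polynomial.derivative_smul,
      Polynomial.hermite_succ n, mul_smul_comm]
    module


lemma He_succ_succ (n : ℕ) (x : ℝ) :
    He (n+2) x = x * He (n+1) x - ((n:ℝ)+1) * He n x := by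
  unfold He
  rw [Polynomial.hermite_succ (n+1), map_sub, map_mul, Polynomial.aeval_X,
    derivative_hermite_succ, map_nsmul]
  push_cast
  ring

lemma hasDerivAt_He_mul_gauss (n : ℕ) (x : ℝ) :
    HasDerivAt (fun y => He n y * Real.exp (-y^2/2))
      (-(He (n+1) x * Real.exp (-x^2/2))) x := by
  have h1 : HasDerivAt (fun y => He n y)
      (Polynomial.aeval x (Polynomial.derivative (Polynomial.hermite n))) x :=
    (Polynomial.hermite n).hasDerivAt_aeval x
  have hy : HasDerivAt (fun y : ℝ => -y^2/2) (-x) x := by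
    have := ((hasDerivAt_pow 2 x).neg.div_const 2)
    convert this using 1 <;> try rfl
    ring
  have h2 := hy.exp
  have h := h1.mul h2
  convert h using 1 <;> try rfl
  have hrec : He (n+1) x = x * He n x
      - Polynomial.aeval x (Polynomial.derivative (Polynomial.hermite n)) := by
    unfold He
    rw [Polynomial.hermite_succ, map_sub, map_mul, Polynomial.aeval_X]
  rw [hrec]
  ring

lemma key_ident (θ₁ θh τ vd wd x : ℝ) (hθ₁ : 0 < θ₁) (n : ℕ)
    (hg : (θh-1)*τ+1 ≠ 0) (hx : x = ((θh-1)*τ+1)*vd + wd*τ) :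
    θ₁ * ((θh-1)/((θh-1)*τ+1)) * (θ₁ ^ (-(((n:ℝ)+3)/2)) * He (n+2) x)
    + wd * Real.sqrt θ₁ * (1/((θh-1)*τ+1)) * (θ₁ ^ (-(((n:ℝ)+2)/2)) * He (n+1) x)
    + ((n:ℝ)+1) * ((θh-1)/((θh-1)*τ+1)) * (θ₁ ^ (-(((n:ℝ)+1)/2)) * He n x)
    = θ₁ ^ (-(((n:ℝ)+1)/2)) * (((θh-1)*vd + wd) * He (n+1) x) := by
  have e1 : θ₁ * θ₁ ^ (-(((n:ℝ)+3)/2)) = θ₁ ^ (-(((n:ℝ)+1)/2)) := by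
    rw [show (-(((n:ℝ)+1)/2)) = 1 + (-(((n:ℝ)+3)/2)) by ring, Real.rpow_add hθ₁, Real.rpow_one]
  have e2 : Real.sqrt θ₁ * θ₁ ^ (-(((n:ℝ)+2)/2)) = θ₁ ^ (-(((n:ℝ)+1)/2)) := by
    rw [Real.sqrt_eq_rpow, ← Real.rpow_add hθ₁]
    norm_num
    ring_nf
  have hgi : ((θh-1)*τ+1) * ((θh-1)*τ+1)⁻¹ = 1 := mul_inv_cancel₀ hg
  rw [He_succ_succ]
  linear_combination ((θh-1) * ((θh-1)*τ+1)⁻¹ * (x * He (n+1) x - ((n:ℝ)+1) * He n x)) * e1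
    + (wd * ((θh-1)*τ+1)⁻¹ * He (n+1) x) * e2
    + ((θh-1) * ((θh-1)*τ+1)⁻¹ * θ₁ ^ (-(((n:ℝ)+1)/2)) * He (n+1) x) * hx
    + (θ₁ ^ (-(((n:ℝ)+1)/2)) * He (n+1) x * ((θh-1)*vd + wd)) * hgi


/-- with `A_d(τ) = ((θ̂−1)τ+1)v_d + w_d τ`, `R(τ) = (θ̂−1)/((θ̂−1)τ+1)` and
`S(τ) = 1/((θ̂−1)τ+1)`, for every multi-index `α` and `τ ∈ [0,1]`:
`∂/∂τ 𝓗_{θ₁,α}(A) = −Σ_d [θ₁ R 𝓗_{θ₁,α+2e_d}(A) + w_d √θ₁ S 𝓗_{θ₁,α+e_d}(A)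
+ (α_d+1) R 𝓗_{θ₁,α}(A)]`. -/
theorem stmt15 (D : ℕ) (hD : 1 ≤ D) (θ₁ : ℝ) (hθ₁ : 0 < θ₁) (θh : ℝ) (hθh : 0 < θh)
    (w v : Fin D → ℝ)
    (A : ℝ → Fin D → ℝ)
    (hA : ∀ τ, A τ = fun d => ((θh - 1) * τ + 1) * v d + w d * τ)
    (R S : ℝ → ℝ)
    (hR : ∀ τ, R τ = (θh - 1) / ((θh - 1) * τ + 1))
    (hS : ∀ τ, S τ = 1 / ((θh - 1) * τ + 1)) :
    ∀ α : Fin D → ℕ, ∀ τ ∈ Set.Icc (0 : ℝ) 1,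
      HasDerivWithinAt (fun t => Hb θ₁ α (A t))
        (-∑ d : Fin D,
          (θ₁ * R τ * Hb θ₁ (fun i => α i + (if i = d then 2 else 0)) (A τ)
            + w d * Real.sqrt θ₁ * S τ *
              Hb θ₁ (fun i => α i + (if i = d then 1 else 0)) (A τ)
            + ((α d : ℝ) + 1) * R τ * Hb θ₁ α (A τ)))
        (Set.Icc (0 : ℝ) 1) τ := by
  intro α τ hτ
  obtain ⟨hτ0, hτ1⟩ := hτ
  have hg : 0 < (θh - 1) * τ + 1 := by
    rcases le_or_gt 1 θh with h | h
    · nlinarith [mul_nonneg (sub_nonneg.mpr h) hτ0]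
    · nlinarith [mul_nonneg (sub_nonneg.mpr hτ1) (sub_nonneg.mpr h.le)]
  have hg' : (θh - 1) * τ + 1 ≠ 0 := ne_of_gt hg
  set c : ℝ := (Real.sqrt (2 * Real.pi))⁻¹ with hc
  set F : Fin D → ℝ → ℝ := fun d t =>
    c * θ₁ ^ (-(((α d : ℝ) + 1) / 2)) * He (α d) (A t d) * Real.exp (-(A t d) ^ 2 / 2) with hF
  set F' : Fin D → ℝ := fun d =>
    c * θ₁ ^ (-(((α d : ℝ) + 1) / 2)) *
      (-(He (α d + 1) (A τ d) * Real.exp (-(A τ d) ^ 2 / 2)) * ((θh - 1) * v d + w d)) with hF'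
  have hder : ∀ d ∈ Finset.univ, HasDerivWithinAt (F d) (F' d) (Set.Icc (0:ℝ) 1) τ := by
    intro d _
    have hx : HasDerivAt (fun t => A t d) ((θh - 1) * v d + w d) τ := by
      simp only [hA]
      have h1 := ((((hasDerivAt_id τ).const_mul (θh - 1)).add_const 1).mul_const (v d)).add
          ((hasDerivAt_id τ).const_mul (w d))
      simp only [id_eq] at h1
      convert h1 using 1 <;> try rfl
      ring
    have hcomp := (hasDerivAt_He_mul_gauss (α d) (A τ d)).comp τ hx
    have hm := hcomp.const_mul (c * θ₁ ^ (-(((α d : ℝ) + 1) / 2)))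
    refine HasDerivAt.hasDerivWithinAt ?_
    have h2 : F d = fun t => (c * θ₁ ^ (-(((α d : ℝ) + 1) / 2))) *
        (He (α d) (A t d) * Real.exp (-(A t d) ^ 2 / 2)) := by
      funext t; simp only [hF]; ring
    rw [h2, hF']
    exact hm
  have big := HasDerivWithinAt.finset_prod hder
  have hfun : (fun t => Hb θ₁ α (A t)) = fun t => ∏ d, F d t := rfl
  rw [hfun]
  convert big using 1 <;> try (first | rfl | (funext t; simp [Finset.prod_apply]))
  have hsplit : ∀ (d : Fin D) (k : ℕ),
      Hb θ₁ (fun i => α i + (if i = d then k else 0)) (A τ)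
      = (c * θ₁ ^ (-(((α d : ℝ) + (k:ℝ) + 1) / 2)) * He (α d + k) (A τ d) *
          Real.exp (-(A τ d) ^ 2 / 2)) * ∏ j ∈ Finset.univ.erase d, F j τ := by
    intro d k
    rw [Hb, ← Finset.mul_prod_erase _ _ (Finset.mem_univ d)]
    congr 1
    · rw [if_pos rfl]
      push_cast
      rw [hc]
    · refine Finset.prod_congr rfl fun j hj => ?_
      have hjd : j ≠ d := (Finset.mem_erase.mp hj).1
      rw [if_neg hjd, add_zero, hF, hc]
  rw [← Finset.sum_neg_distrib]
  refine Finset.sum_congr rfl fun d _ => ?_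
  have hα : (fun i => α i + (if i = d then 0 else 0)) = α := by funext i; simp
  have h0 := hsplit d 0
  rw [hα] at h0
  have h1 := hsplit d 1
  have h2 := hsplit d 2
  have hx : A τ d = ((θh - 1) * τ + 1) * v d + w d * τ := by rw [hA]
  have keyh := key_ident θ₁ θh τ (v d) (w d) (A τ d) hθ₁ (α d) hg' hx
  norm_num at h0 h1 h2
  rw [show ((α d:ℝ) + 1 + 1) = ((α d:ℝ) + 2) by ring] at h1
  rw [show ((α d:ℝ) + 2 + 1) = ((α d:ℝ) + 3) by ring] at h2
  rw [smul_eq_mul, h0, h1, h2, hR, hS, hF']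
  linear_combination (-(c * Real.exp (-(A τ d)^2/2) * ∏ j ∈ Finset.univ.erase d, F j τ)) * keyh
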